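/- Let {S_ι : ι ∈ I} be an infinite collection of semigroups each with identity, nets F_ι in P_f(S_ι), and let F be the product net determined by {F_ι}. For subsets A_ι ⊆ S_ι, d*_F(∏_{ι∈I} A_ι) = ∏_{ι∈I} d*_{F_ι}(A_ι), where the infinite product of numbers in [0,1] is defined as inf over finite subproducts. -/
import Mathlib


open scoped Classical symmDiff

/-- The translate `F · s` of a finite piece `F` by an element of `S ∪ {1}`
(`none` meaning "no shift"). -/
def netShift {S : Type*} [Mul S] (F : Set S) : Option S → Set S
  | none => F
  | some t => (· * t) '' F

/-- Upper Banach density of `A ⊆ S` with respect to a net `F = ⟨F i⟩` of finite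
nonempty subsets of `S`, indexed by a directed preorder `I`. -/
noncomputable def uBD {S : Type*} [Mul S] {I : Type*} [Preorder I]
    (F : I → Set S) (A : Set S) : ℝ :=
  sSup {α : ℝ | ∀ i₀ : I, ∃ i, i₀ ≤ i ∧ ∃ s : Option S,
    α * ((F i).ncard : ℝ) ≤ ((A ∩ netShift (F i) s).ncard : ℝ)}

/-- Extension of the net `F` on index set `J` to `J' = J ∪ {1}`, where the
distinguished index `⊥` carries the singleton `{1}`. -/
noncomputable def extNet {S : Type*} [One S] {J : Type*} (F : J → Set S) :
    WithBot J → Set S :=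
  WithBot.recBotCoe ({1} : Set S) F

/-- The index set `𝔍` of the product net: vectors of extended indices that differ
from the distinguished index `⊥` in only finitely many coordinates, ordered
coordinatewise. -/
abbrev ProdIdx {ι : Type*} (J : ι → Type*) : Type _ :=
  {j : ∀ i, WithBot (J i) // {i | j i ≠ ⊥}.Finite}

/-- The product net determined by the family of nets `F i`. -/
noncomputable def prodNet {ι : Type*} {S : ι → Type*} [∀ i, One (S i)]
    {J : ι → Type*} (F : ∀ i, J i → Set (S i)) :
    ProdIdx J → Set (∀ i, S i) :=
  fun j => Set.pi Set.univ fun i => extNet (F i) (j.1 i)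

lemma netShift_finite {S : Type*} [Mul S] {F : Set S} (h : F.Finite) (s : Option S) :
    (netShift F s).Finite := by
  cases s with
  | none => exact h
  | some t => exact h.image _

lemma netShift_ncard_le {S : Type*} [Mul S] {F : Set S} (h : F.Finite) (s : Option S) :
    (netShift F s).ncard ≤ F.ncard := by
  cases s with
  | none => exact le_rfl
  | some t => exact Set.ncard_image_le h

lemma netShift_subsingleton {S : Type*} [Mul S] {F : Set S} (h : F.Subsingleton)
    (s : Option S) : (netShift F s).Subsingleton := by
  cases s with
  | none => exact h
  | some t => exact h.image _

lemma ncard_univ_pi {ι : Type*} {S : ι → Type*} (C : ∀ i, Set (S i)) (H : Finset ι)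
    (hsingle : ∀ i ∉ H, ∃ c, C i = {c}) :
    (Set.pi Set.univ C).ncard = ∏ i ∈ H, (C i).ncard := by
  haveI hne' : ∀ (i : {x : ι // ¬ x ∈ H}), Nonempty ↥(C i.1) := fun i => by
    obtain ⟨c, hc⟩ := hsingle i.1 i.2
    rw [hc]; infer_instance
  haveI hss' : ∀ (i : {x : ι // ¬ x ∈ H}), Subsingleton ↥(C i.1) := fun i => by
    obtain ⟨c, hc⟩ := hsingle i.1 i.2
    rw [hc]; infer_instance
  haveI : Nonempty (∀ i : {x : ι // ¬ x ∈ H}, ↥(C i.1)) := Classical.nonempty_pi.mpr hne'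
  have e : ↥(Set.pi Set.univ C) ≃ (∀ i : {x : ι // x ∈ H}, ↥(C i.1)) ×
      (∀ i : {x : ι // ¬ x ∈ H}, ↥(C i.1)) :=
    (Equiv.Set.univPi C).trans (Equiv.piEquivPiSubtypeProd (fun i => i ∈ H) (fun i => ↥(C i)))
  calc (Set.pi Set.univ C).ncard = Nat.card ↥(Set.pi Set.univ C) :=
        (Nat.card_coe_set_eq _).symm
    _ = Nat.card ((∀ i : {x : ι // x ∈ H}, ↥(C i.1)) × (∀ i : {x : ι // ¬ x ∈ H}, ↥(C i.1))) :=
        Nat.card_congr e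
    _ = (∏ i : {x : ι // x ∈ H}, Nat.card ↥(C i.1)) * 1 := by
        rw [Nat.card_prod, Nat.card_pi, Nat.card_unique]
    _ = ∏ i ∈ H, (C i).ncard := by
        rw [mul_one]
        simp_rw [Nat.card_coe_set_eq]
        exact Finset.prod_coe_sort H (fun i => (C i).ncard)

lemma finite_univ_pi {ι : Type*} {S : ι → Type*} (C : ∀ i, Set (S i)) (H : Finset ι)
    (hsingle : ∀ i ∉ H, ∃ c, C i = {c}) (hfin : ∀ i, (C i).Finite) :
    (Set.pi Set.univ C).Finite := by
  haveI : ∀ i, Finite ↥(C i) := fun i => (hfin i).to_subtype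
  haveI hne' : ∀ (i : {x : ι // ¬ x ∈ H}), Nonempty ↥(C i.1) := fun i => by
    obtain ⟨c, hc⟩ := hsingle i.1 i.2
    rw [hc]; infer_instance
  haveI hss' : ∀ (i : {x : ι // ¬ x ∈ H}), Subsingleton ↥(C i.1) := fun i => by
    obtain ⟨c, hc⟩ := hsingle i.1 i.2
    rw [hc]; infer_instance
  haveI : Nonempty (∀ i : {x : ι // ¬ x ∈ H}, ↥(C i.1)) := Classical.nonempty_pi.mpr hne'
  have e : ↥(Set.pi Set.univ C) ≃ (∀ i : {x : ι // x ∈ H}, ↥(C i.1)) ×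
      (∀ i : {x : ι // ¬ x ∈ H}, ↥(C i.1)) :=
    (Equiv.Set.univPi C).trans (Equiv.piEquivPiSubtypeProd (fun i => i ∈ H) (fun i => ↥(C i)))
  rw [← Set.finite_coe_iff]
  exact Finite.of_equiv _ e.symm

lemma ncard_univ_pi_le {ι : Type*} {S : ι → Type*} (C : ∀ i, Set (S i)) (H : Finset ι)
    (hss : ∀ i ∉ H, (C i).Subsingleton) :
    (Set.pi Set.univ C).ncard ≤ ∏ i ∈ H, (C i).ncard := by
  rcases (Set.pi Set.univ C).eq_empty_or_nonempty with h | ⟨x, hx⟩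
  · rw [h, Set.ncard_empty]; exact Nat.zero_le _
  · refine le_of_eq (ncard_univ_pi C H fun i hi => ⟨x i, ?_⟩)
    exact (hss i hi).eq_singleton_of_mem (hx i (Set.mem_univ i))

def uBDSet {S : Type*} [Mul S] {I : Type*} [Preorder I]
    (F : I → Set S) (A : Set S) : Set ℝ :=
  {α : ℝ | ∀ i₀ : I, ∃ i, i₀ ≤ i ∧ ∃ s : Option S,
    α * ((F i).ncard : ℝ) ≤ ((A ∩ netShift (F i) s).ncard : ℝ)}

lemma uBD_eq_sSup {S : Type*} [Mul S] {I : Type*} [Preorder I]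
    (F : I → Set S) (A : Set S) : uBD F A = sSup (uBDSet F A) := rfl

section generic
variable {S : Type*} [Mul S] {I : Type*} [Preorder I] {F : I → Set S} {A : Set S}

lemma mem_uBDSet_of_nonpos {α : ℝ} (hα : α ≤ 0) : α ∈ uBDSet F A :=
  fun i₀ => ⟨i₀, le_refl _, none, le_trans
    (mul_nonpos_iff.mpr (Or.inr ⟨hα, Nat.cast_nonneg _⟩)) (Nat.cast_nonneg _)⟩

lemma uBDSet_nonempty : (uBDSet F A).Nonempty := ⟨0, mem_uBDSet_of_nonpos le_rfl⟩

set_option linter.unusedSectionVars false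
variable (hfin : ∀ i, (F i).Finite) (hne : ∀ i, (F i).Nonempty) [Nonempty I]
include hfin hne

lemma count_le_card (i : I) (s : Option S) :
    ((A ∩ netShift (F i) s).ncard : ℝ) ≤ ((F i).ncard : ℝ) := by
  exact_mod_cast le_trans
    (Set.ncard_le_ncard Set.inter_subset_right (netShift_finite (hfin i) s))
    (netShift_ncard_le (hfin i) s)

lemma one_le_card (i : I) : (1 : ℝ) ≤ ((F i).ncard : ℝ) := by
  exact_mod_cast (Set.ncard_pos (hfin i)).mpr (hne i)

lemma uBDSet_bddAbove : BddAbove (uBDSet F A) := by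
  refine ⟨1, fun α hα => ?_⟩
  obtain ⟨i, -, s, h⟩ := hα (Classical.arbitrary I)
  have h1 := count_le_card (A := A) hfin hne i s
  have h2 := one_le_card (F := F) hfin hne i
  nlinarith

lemma le_uBD {α : ℝ} (hα : α ∈ uBDSet F A) : α ≤ uBD F A :=
  le_csSup (uBDSet_bddAbove hfin hne) hα

lemma uBD_nonneg : 0 ≤ uBD F A :=
  le_uBD hfin hne (mem_uBDSet_of_nonpos le_rfl)

lemma uBD_le_one : uBD F A ≤ 1 := by
  refine csSup_le uBDSet_nonempty fun α hα => ?_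
  obtain ⟨i, -, s, h⟩ := hα (Classical.arbitrary I)
  have h1 := count_le_card (A := A) hfin hne i s
  have h2 := one_le_card (F := F) hfin hne i
  nlinarith

omit hfin hne [Nonempty I] in
lemma mem_uBDSet_of_lt {α : ℝ} (h : α < uBD F A) : α ∈ uBDSet F A := by
  obtain ⟨w, hw, hlt⟩ := exists_lt_of_lt_csSup uBDSet_nonempty h
  intro i₀
  obtain ⟨i, hi, s, hs⟩ := hw i₀
  exact ⟨i, hi, s, le_trans (mul_le_mul_of_nonneg_right hlt.le (Nat.cast_nonneg _)) hs⟩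

lemma uBD_eventual {ε : ℝ} (hε : 0 < ε) :
    ∃ i₀ : I, ∀ i, i₀ ≤ i → ∀ s : Option S,
      ((A ∩ netShift (F i) s).ncard : ℝ) ≤ (uBD F A + ε) * ((F i).ncard : ℝ) := by
  by_contra h
  push_neg at h
  have hmem : uBD F A + ε ∈ uBDSet F A := by
    intro i₀
    obtain ⟨i, hi, s, hs⟩ := h i₀
    exact ⟨i, hi, s, hs.le⟩
  have := le_uBD hfin hne hmem
  linarith

lemma nonempty_of_uBD_pos (h : 0 < uBD F A) : A.Nonempty := by
  by_contra hA
  rw [Set.not_nonempty_iff_eq_empty] at hA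
  subst hA
  have : uBD F (∅ : Set S) ≤ 0 := by
    refine csSup_le uBDSet_nonempty fun α hα => ?_
    obtain ⟨i, -, s, hs⟩ := hα (Classical.arbitrary I)
    rw [Set.empty_inter, Set.ncard_empty] at hs
    push_cast at hs
    have h2 := one_le_card (F := F) hfin hne i
    nlinarith [hs]
  linarith

end generic

section ext
variable {S : Type*} [One S] {J : Type*} {F : J → Set S}

@[simp] lemma extNet_bot : extNet F (⊥ : WithBot J) = {1} := rfl
@[simp] lemma extNet_coe (j : J) : extNet F (j : WithBot J) = F j := rfl

lemma extNet_finite (hfin : ∀ j, (F j).Finite) (w : WithBot J) : (extNet F w).Finite := by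
  induction w using WithBot.recBotCoe with
  | bot => exact Set.finite_singleton 1
  | coe j => exact hfin j

lemma extNet_nonempty (hne : ∀ j, (F j).Nonempty) (w : WithBot J) : (extNet F w).Nonempty := by
  induction w using WithBot.recBotCoe with
  | bot => exact ⟨1, rfl⟩
  | coe j => exact hne j

end ext

instance {ι : Type*} (J : ι → Type*) : Nonempty (ProdIdx J) :=
  ⟨⟨fun _ => ⊥, by simp⟩⟩

lemma netShift_pi {ι : Type*} {S : ι → Type*} [∀ i, Mul (S i)] (B : ∀ i, Set (S i))
    (s : Option (∀ i, S i)) :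
    netShift (Set.pi Set.univ B) s =
      Set.pi Set.univ (fun i => netShift (B i) (s.map (fun t => t i))) := by
  cases s with
  | none => rfl
  | some t =>
    ext x
    simp only [netShift, Option.map_some, Set.mem_image, Set.mem_pi, Set.mem_univ,
      forall_true_left]
    constructor
    · rintro ⟨y, hy, rfl⟩ i
      exact ⟨y i, hy i, rfl⟩
    · intro h
      choose y hy hxy using h
      exact ⟨y, hy, funext hxy⟩

lemma prodNet_finite {ι : Type*} {S : ι → Type*} [∀ i, Monoid (S i)]
    {J : ι → Type*} (F : ∀ i, J i → Set (S i)) (hfin : ∀ i j, (F i j).Finite)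
    (j : ProdIdx J) : (prodNet F j).Finite := by
  refine finite_univ_pi _ j.2.toFinset (fun i hi => ⟨1, ?_⟩) (fun i => extNet_finite (hfin i) _)
  rw [Set.Finite.mem_toFinset] at hi
  simp only [Set.mem_setOf_eq, not_not] at hi
  rw [hi, extNet_bot]

lemma prodNet_nonempty {ι : Type*} {S : ι → Type*} [∀ i, Monoid (S i)]
    {J : ι → Type*} (F : ∀ i, J i → Set (S i)) (hne : ∀ i j, (F i j).Nonempty)
    (j : ProdIdx J) : (prodNet F j).Nonempty :=
  Set.univ_pi_nonempty_iff.mpr fun i => extNet_nonempty (hne i) _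

section main
variable {ι : Type*} [Infinite ι]
    {S : ι → Type*} [∀ i, Monoid (S i)]
    {J : ι → Type*} [∀ i, Preorder (J i)] [∀ i, Nonempty (J i)]
    (F : ∀ i, J i → Set (S i))
    (hfin : ∀ i j, (F i j).Finite) (hne : ∀ i j, (F i j).Nonempty)
    (A : ∀ i, Set (S i))

include hfin hne

lemma prod_density_le (G : Finset ι) :
    uBD (prodNet F) (Set.pi Set.univ A) ≤ ∏ i ∈ G, uBD (F i) (A i) := by
  set d := fun i => uBD (F i) (A i) with hd
  have hstep : ∀ ε : ℝ, 0 < ε →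
      uBD (prodNet F) (Set.pi Set.univ A) ≤ ∏ i ∈ G, (d i + ε) := by
    intro ε hε
    have hj : ∀ i : ι, ∃ j₀ : J i, ∀ j, j₀ ≤ j → ∀ s : Option (S i),
        ((A i ∩ netShift (F i j) s).ncard : ℝ) ≤ (d i + ε) * ((F i j).ncard : ℝ) :=
      fun i => uBD_eventual (hfin i) (hne i) hε
    choose j₀ hj₀ using hj
    refine csSup_le uBDSet_nonempty fun α hα => ?_
    obtain ⟨i, hi, s, hs⟩ := hα ⟨fun i => if h : i ∈ G then (j₀ i : WithBot (J i)) else ⊥, by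
      apply Set.Finite.subset G.finite_toSet
      intro i hi
      simp only [Set.mem_setOf_eq] at hi
      by_contra hG
      exact hi (dif_neg hG)⟩
    set B : ∀ i', Set (S i') := fun i' => extNet (F i') (i.1 i') with hB
    set sc : ∀ i', Option (S i') := fun i' => s.map (fun t => t i') with hsc
    set C : ∀ i', Set (S i') := fun i' => A i' ∩ netShift (B i') (sc i') with hC
    have hrw : Set.pi Set.univ A ∩ netShift (prodNet F i) s = Set.pi Set.univ C := by
      rw [show prodNet F i = Set.pi Set.univ B from rfl, netShift_pi, ← Set.pi_inter_distrib]
    rw [hrw] at hs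
    set H : Finset ι := i.2.toFinset ∪ G with hH
    have hGsubH : G ⊆ H := Finset.subset_union_right
    have hBsing : ∀ i' ∉ H, ∃ c, B i' = {c} := by
      intro i' hi'
      refine ⟨1, ?_⟩
      have hbot : i.1 i' = ⊥ := by
        by_contra hbot
        exact hi' (Finset.mem_union_left _ (i.2.mem_toFinset.mpr hbot))
      show extNet (F i') (i.1 i') = {1}
      rw [hbot, extNet_bot]
    have cardF : ((prodNet F i).ncard : ℝ) = ∏ i' ∈ H, ((B i').ncard : ℝ) := by
      rw [show prodNet F i = Set.pi Set.univ B from rfl, ncard_univ_pi B H hBsing]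
      push_cast
      rfl
    have cardC : ((Set.pi Set.univ C).ncard : ℝ) ≤ ∏ i' ∈ H, ((C i').ncard : ℝ) := by
      have h1 : (Set.pi Set.univ C).ncard ≤ ∏ i' ∈ H, (C i').ncard := by
        refine ncard_univ_pi_le C H fun i' hi' => ?_
        obtain ⟨c, hc⟩ := hBsing i' hi'
        have : (netShift (B i') (sc i')).Subsingleton :=
          netShift_subsingleton (by rw [hc]; exact Set.subsingleton_singleton) _
        exact this.anti Set.inter_subset_right
      calc ((Set.pi Set.univ C).ncard : ℝ) ≤ ((∏ i' ∈ H, (C i').ncard : ℕ) : ℝ) := by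
            exact_mod_cast h1
        _ = ∏ i' ∈ H, ((C i').ncard : ℝ) := by push_cast; rfl
    have hfactor : ∀ i' ∈ H, ((C i').ncard : ℝ) ≤
        (if i' ∈ G then d i' + ε else 1) * ((B i').ncard : ℝ) := by
      intro i' _
      by_cases hiG : i' ∈ G
      · rw [if_pos hiG]
        have hle : (j₀ i' : WithBot (J i')) ≤ i.1 i' := by
          have := hi i'
          simpa [hiG] using this
        obtain ⟨j, hj1, hj2⟩ := WithBot.coe_le_iff.mp hle
        have hBi : B i' = F i' j := by
          show extNet (F i') (i.1 i') = F i' j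
          rw [hj1, extNet_coe]
        have hCi : C i' = A i' ∩ netShift (F i' j) (sc i') := by rw [hC]; simp only [hBi]
        rw [hCi, hBi]
        exact hj₀ i' j hj2 (sc i')
      · rw [if_neg hiG, one_mul]
        have hBfin : (B i').Finite := extNet_finite (hfin i') _
        exact_mod_cast le_trans
          (Set.ncard_le_ncard Set.inter_subset_right (netShift_finite hBfin _))
          (netShift_ncard_le hBfin _)
    have hpos : (0:ℝ) < ∏ i' ∈ H, ((B i').ncard : ℝ) := by
      refine Finset.prod_pos fun i' _ => ?_
      exact_mod_cast (Set.ncard_pos (extNet_finite (hfin i') _)).mpr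
        (extNet_nonempty (hne i') _)
    have hsplit : ∏ i' ∈ H, (if i' ∈ G then d i' + ε else 1) * ((B i').ncard : ℝ) =
        (∏ i' ∈ G, (d i' + ε)) * ∏ i' ∈ H, ((B i').ncard : ℝ) := by
      rw [Finset.prod_mul_distrib]
      congr 1
      rw [← Finset.prod_subset hGsubH (fun x _ hx => if_neg hx)]
      exact Finset.prod_congr rfl fun x hx => if_pos hx
    have hchain : α * ∏ i' ∈ H, ((B i').ncard : ℝ) ≤
        (∏ i' ∈ G, (d i' + ε)) * ∏ i' ∈ H, ((B i').ncard : ℝ) := by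
      calc α * ∏ i' ∈ H, ((B i').ncard : ℝ) = α * ((prodNet F i).ncard : ℝ) := by rw [cardF]
        _ ≤ ((Set.pi Set.univ C).ncard : ℝ) := hs
        _ ≤ ∏ i' ∈ H, ((C i').ncard : ℝ) := cardC
        _ ≤ ∏ i' ∈ H, (if i' ∈ G then d i' + ε else 1) * ((B i').ncard : ℝ) :=
            Finset.prod_le_prod (fun i' _ => Nat.cast_nonneg _) hfactor
        _ = (∏ i' ∈ G, (d i' + ε)) * ∏ i' ∈ H, ((B i').ncard : ℝ) := hsplit
    exact le_of_mul_le_mul_right hchain hpos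
  have htend : Filter.Tendsto (fun ε : ℝ => ∏ i ∈ G, (d i + ε))
      (nhdsWithin 0 (Set.Ioi 0)) (nhds (∏ i ∈ G, d i)) := by
    have hcont : Continuous fun ε : ℝ => ∏ i ∈ G, (d i + ε) :=
      continuous_finset_prod _ fun i _ => continuous_const.add continuous_id
    have h0 := hcont.tendsto 0
    simp only [add_zero] at h0
    exact h0.mono_left nhdsWithin_le_nhds
  exact ge_of_tendsto htend (eventually_nhdsWithin_of_forall fun ε hε => hstep ε hε)

end main

section main2
set_option linter.unusedSectionVars false
variable {ι : Type*} [Infinite ι]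
    {S : ι → Type*} [∀ i, Monoid (S i)]
    {J : ι → Type*} [∀ i, Preorder (J i)] [∀ i, Nonempty (J i)]
    (F : ∀ i, J i → Set (S i))
    (hfin : ∀ i j, (F i j).Finite) (hne : ∀ i j, (F i j).Nonempty)
    (A : ∀ i, Set (S i))

include hfin hne

lemma le_prod_density :
    sInf {x : ℝ | ∃ G : Finset ι, G.Nonempty ∧ x = ∏ i ∈ G, uBD (F i) (A i)} ≤
      uBD (prodNet F) (Set.pi Set.univ A) := by
  have hPfin : ∀ j, (prodNet F j).Finite := prodNet_finite F hfin
  have hPne : ∀ j, (prodNet F j).Nonempty := prodNet_nonempty F hne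
  set d := fun i => uBD (F i) (A i) with hd
  set T := {x : ℝ | ∃ G : Finset ι, G.Nonempty ∧ x = ∏ i ∈ G, d i} with hT
  have hdnn : ∀ i, 0 ≤ d i := fun i => uBD_nonneg (hfin i) (hne i)
  have hd1 : ∀ i, d i ≤ 1 := fun i => uBD_le_one (hfin i) (hne i)
  have hTbdd : BddBelow T := by
    refine ⟨0, fun x hx => ?_⟩
    obtain ⟨G, hG, rfl⟩ := hx
    exact Finset.prod_nonneg fun i _ => hdnn i
  refine le_of_forall_pos_le_add fun ε hε => ?_
  set α := sInf T - ε with hα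
  suffices h : α ≤ uBD (prodNet F) (Set.pi Set.univ A) by
    rw [hα] at h; linarith
  rcases le_or_gt α 0 with hα0 | hα0
  · exact le_trans hα0 (uBD_nonneg hPfin hPne)
  have hαlt : ∀ κ : ι, α < d κ := by
    intro κ
    have h1 : sInf T ≤ d κ :=
      csInf_le hTbdd ⟨{κ}, Finset.singleton_nonempty κ, (Finset.prod_singleton ..).symm⟩
    rw [hα]; linarith
  have hAne : ∀ κ, (A κ).Nonempty := fun κ =>
    nonempty_of_uBD_pos (hfin κ) (hne κ) (lt_trans hα0 (hαlt κ))
  refine le_uBD hPfin hPne ?_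
  intro i₀
  set Hfin := i₀.2.toFinset with hHfin
  have hprodd : α < ∏ i' ∈ Hfin, d i' := by
    rcases Hfin.eq_empty_or_nonempty with h | h
    · rw [h, Finset.prod_empty]
      exact lt_of_lt_of_le (hαlt (Classical.arbitrary ι)) (hd1 _)
    · refine lt_of_lt_of_le ?_ (csInf_le hTbdd ⟨Hfin, h, rfl⟩)
      rw [hα]; linarith
  obtain ⟨δ, hδpos, hδ⟩ : ∃ δ : ℝ, 0 < δ ∧ α < ∏ i' ∈ Hfin, max (d i' - δ) 0 := by
    have hcont : Continuous fun δ : ℝ => ∏ i' ∈ Hfin, max (d i' - δ) 0 :=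
      continuous_finset_prod _ fun i _ => (continuous_const.sub continuous_id).max continuous_const
    have htt := (hcont.tendsto 0).mono_left (nhdsWithin_le_nhds (s := Set.Ioi (0:ℝ)))
    have heq : (∏ i' ∈ Hfin, max (d i' - (0:ℝ)) 0) = ∏ i' ∈ Hfin, d i' := by
      refine Finset.prod_congr rfl fun i _ => ?_
      rw [sub_zero, max_eq_left (hdnn i)]
    rw [heq] at htt
    have hev := (htt.eventually (eventually_gt_nhds hprodd)).and self_mem_nhdsWithin
    obtain ⟨δ, h1, h2⟩ := hev.exists
    exact ⟨δ, h2, h1⟩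
  have key : ∀ κ : ι, ∃ (v : WithBot (J κ)) (b : S κ),
      i₀.1 κ ≤ v ∧
      (i₀.1 κ = ⊥ → v = ⊥ ∧ A κ ∩ (· * b) '' (extNet (F κ) v) = {b}) ∧
      max (d κ - δ) 0 * ((extNet (F κ) v).ncard : ℝ) ≤
        ((A κ ∩ (· * b) '' (extNet (F κ) v)).ncard : ℝ) := by
    intro κ
    rcases hbot : i₀.1 κ with _ | j₀κ
    · obtain ⟨a, ha⟩ := hAne κ
      have him : (· * a) '' (extNet (F κ) (⊥ : WithBot (J κ))) = {a} := by
        rw [extNet_bot, Set.image_singleton, one_mul]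
      have hia : A κ ∩ (· * a) '' (extNet (F κ) (⊥ : WithBot (J κ))) = {a} := by
        rw [him]
        exact Set.inter_eq_right.mpr (Set.singleton_subset_iff.mpr ha)
      refine ⟨⊥, a, bot_le, fun _ => ⟨rfl, hia⟩, ?_⟩
      rw [hia, extNet_bot, Set.ncard_singleton, Set.ncard_singleton]
      have : max (d κ - δ) 0 ≤ 1 := max_le (by linarith [hd1 κ]) zero_le_one
      push_cast
      linarith
    · have hβ : max (d κ - δ) 0 ∈ uBDSet (F κ) (A κ) := by
        rcases le_or_gt (d κ - δ) 0 with h | h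
        · rw [max_eq_right h]; exact mem_uBDSet_of_nonpos le_rfl
        · rw [max_eq_left h.le]
          exact mem_uBDSet_of_lt (by simp only [hd]; linarith)
      obtain ⟨j, hj, sκ, hsκ⟩ := hβ j₀κ
      refine ⟨(j : WithBot (J κ)), sκ.elim 1 id, ?_, ?_, ?_⟩
      · exact WithBot.coe_le_coe.mpr hj
      · intro h; exact absurd h (by simp)
      · rw [extNet_coe]
        cases sκ with
        | none =>
          have h1 : (· * (Option.none : Option (S κ)).elim 1 id) '' (F κ j) = F κ j := by
            simp only [Option.elim]
            simp [mul_one]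
          rw [h1]
          exact hsκ
        | some v =>
          exact hsκ
  choose v b hv1 hv2 hv3 using key
  have hsupp : {κ | v κ ≠ ⊥}.Finite := by
    refine i₀.2.subset fun κ hκ => ?_
    simp only [Set.mem_setOf_eq] at hκ ⊢
    intro hb
    exact hκ ((hv2 κ hb).1)
  refine ⟨⟨v, hsupp⟩, hv1, some b, ?_⟩
  set B : ∀ κ, Set (S κ) := fun κ => extNet (F κ) (v κ) with hB
  set C : ∀ κ, Set (S κ) := fun κ => A κ ∩ (· * b κ) '' (B κ) with hC
  have hrw : Set.pi Set.univ A ∩ netShift (prodNet F ⟨v, hsupp⟩) (some b) =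
      Set.pi Set.univ C := by
    rw [show prodNet F ⟨v, hsupp⟩ = Set.pi Set.univ B from rfl, netShift_pi,
      ← Set.pi_inter_distrib]
    simp only [Option.map_some]
    rfl
  rw [hrw]
  have hb' : ∀ κ ∉ Hfin, i₀.1 κ = ⊥ := by
    intro κ hκ
    by_contra h
    exact hκ (i₀.2.mem_toFinset.mpr h)
  have hCsing : ∀ κ ∉ Hfin, ∃ c, C κ = {c} := fun κ hκ => ⟨b κ, (hv2 κ (hb' κ hκ)).2⟩
  have hBsing : ∀ κ ∉ Hfin, ∃ c, B κ = {c} := fun κ hκ => by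
    refine ⟨1, ?_⟩
    show extNet (F κ) (v κ) = {1}
    rw [(hv2 κ (hb' κ hκ)).1, extNet_bot]
  have cardF : ((prodNet F ⟨v, hsupp⟩).ncard : ℝ) = ∏ κ ∈ Hfin, ((B κ).ncard : ℝ) := by
    rw [show prodNet F ⟨v, hsupp⟩ = Set.pi Set.univ B from rfl, ncard_univ_pi B Hfin hBsing]
    push_cast
    rfl
  have cardC : ((Set.pi Set.univ C).ncard : ℝ) = ∏ κ ∈ Hfin, ((C κ).ncard : ℝ) := by
    rw [ncard_univ_pi C Hfin hCsing]
    push_cast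
    rfl
  rw [cardF, cardC]
  have hBnn : (0:ℝ) ≤ ∏ κ ∈ Hfin, ((B κ).ncard : ℝ) :=
    Finset.prod_nonneg fun κ _ => Nat.cast_nonneg _
  calc α * ∏ κ ∈ Hfin, ((B κ).ncard : ℝ)
      ≤ (∏ κ ∈ Hfin, max (d κ - δ) 0) * ∏ κ ∈ Hfin, ((B κ).ncard : ℝ) :=
        mul_le_mul_of_nonneg_right hδ.le hBnn
    _ = ∏ κ ∈ Hfin, (max (d κ - δ) 0 * ((B κ).ncard : ℝ)) := (Finset.prod_mul_distrib).symm
    _ ≤ ∏ κ ∈ Hfin, ((C κ).ncard : ℝ) := by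
        refine Finset.prod_le_prod (fun κ _ => ?_) (fun κ _ => hv3 κ)
        exact mul_nonneg (le_max_right _ _) (Nat.cast_nonneg _)

end main2

theorem prodNet_density_pi {ι : Type*} [Infinite ι]
    {S : ι → Type*} [∀ i, Monoid (S i)]
    {J : ι → Type*} [∀ i, Preorder (J i)] [∀ i, Nonempty (J i)]
    (F : ∀ i, J i → Set (S i))
    (hfin : ∀ i j, (F i j).Finite) (hne : ∀ i j, (F i j).Nonempty)
    (hdir : ∀ i, ∀ j k : J i, ∃ l, j ≤ l ∧ k ≤ l)
    (A : ∀ i, Set (S i)) :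
    uBD (prodNet F) (Set.pi Set.univ A) =
      sInf {x : ℝ | ∃ G : Finset ι, G.Nonempty ∧ x = ∏ i ∈ G, uBD (F i) (A i)} := by
  refine le_antisymm (le_csInf ?_ fun x hx => ?_) (le_prod_density F hfin hne A)
  · obtain ⟨κ⟩ := (inferInstance : Nonempty ι)
    exact ⟨uBD (F κ) (A κ), {κ}, Finset.singleton_nonempty κ, (Finset.prod_singleton ..).symm⟩
  · obtain ⟨G, hG, rfl⟩ := hx
    exact prod_density_le F hfin hne A G
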